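/- arXiv:1601.01003 — 3 statements merged into one kernel-verified Lean document; each statement's English description precedes it below -/
import Mathlib

section
/- Let x(q), y(q) ∈ ℤ[q]/(qᵐ − 1) be cyclic polynomials all of whose m coefficients are ±1, and let c(q) = x(q)·y(q). Then every coefficient of c(q) is an odd integer, and all coefficients of c(q) are congruent to each other modulo 4. -/
/-- If `x, y` are cyclic polynomials mod `qᵐ − 1` (`m` odd) with all
coefficients `±1`, then every coefficient of `c = x·y` is odd and all
coefficients of `c` are congruent mod 4. Here `c_k = ∑_{i} x_i y_{k-i}` with
indices in `ZMod m`. -/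
theorem stmt9 (m : ℕ) [NeZero m] (hm : Odd m) (x y : ZMod m → ℤ)
    (hx : ∀ i, x i = 1 ∨ x i = -1) (hy : ∀ i, y i = 1 ∨ y i = -1) :
    (∀ k : ZMod m, Odd (∑ i : ZMod m, x i * y (k - i))) ∧
    ∀ k k' : ZMod m,
      (∑ i : ZMod m, x i * y (k - i)) ≡ (∑ i : ZMod m, x i * y (k' - i)) [ZMOD 4] := by
  classical
  have hterm : ∀ k i : ZMod m, x i * y (k - i) = 1 ∨ x i * y (k - i) = -1 := by
    intro k i
    rcases hx i with h | h <;> rcases hy (k - i) with h' | h' <;> simp [h, h']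
  set N : ZMod m → ℕ :=
    fun k => (Finset.univ.filter fun i => x i * y (k - i) = -1).card with hN
  -- sum identity
  have hsum : ∀ k : ZMod m, (∑ i : ZMod m, x i * y (k - i)) = (m : ℤ) - 2 * N k := by
    intro k
    rw [← Finset.sum_filter_add_sum_filter_not Finset.univ
      (fun i => x i * y (k - i) = -1) (fun i => x i * y (k - i))]
    have h1 : (∑ i ∈ Finset.univ.filter fun i => x i * y (k - i) = -1,
        x i * y (k - i)) = -(N k : ℤ) := by
      rw [Finset.sum_congr rfl (fun i hi => (Finset.mem_filter.mp hi).2)]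
      simp [hN]
    have h2 : (∑ i ∈ Finset.univ.filter fun i => ¬(x i * y (k - i) = -1),
        x i * y (k - i)) =
        ((Finset.univ.filter fun i => ¬(x i * y (k - i) = -1)).card : ℤ) := by
      have h1' : ∀ i ∈ Finset.univ.filter fun i => ¬(x i * y (k - i) = -1),
          x i * y (k - i) = 1 := by
        intro i hi
        rcases hterm k i with h | h
        · exact h
        · exact absurd h (Finset.mem_filter.mp hi).2
      rw [Finset.sum_congr rfl h1', Finset.sum_const, nsmul_eq_mul, mul_one]
    have hcard : N k + (Finset.univ.filter fun i => ¬(x i * y (k - i) = -1)).card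
        = m := by
      rw [hN]
      rw [Finset.card_filter_add_card_filter_not, Finset.card_univ,
        ZMod.card]
    rw [h1, h2]
    omega
  -- product identity
  have hprod : ∀ k : ZMod m, (∏ i : ZMod m, x i * y (k - i)) = (-1 : ℤ) ^ N k := by
    intro k
    rw [← Finset.prod_filter_mul_prod_filter_not Finset.univ
      (fun i => x i * y (k - i) = -1) (fun i => x i * y (k - i))]
    have h1 : (∏ i ∈ Finset.univ.filter fun i => x i * y (k - i) = -1,
        x i * y (k - i)) = (-1 : ℤ) ^ N k := by
      rw [Finset.prod_congr rfl (fun i hi => (Finset.mem_filter.mp hi).2),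
        Finset.prod_const]
    have h2 : (∏ i ∈ Finset.univ.filter fun i => ¬(x i * y (k - i) = -1),
        x i * y (k - i)) = 1 := by
      apply Finset.prod_eq_one
      intro i hi
      rcases hterm k i with h | h
      · exact h
      · exact absurd h (Finset.mem_filter.mp hi).2
    rw [h1, h2, mul_one]
  -- product is independent of k
  have hind : ∀ k : ZMod m, (∏ i : ZMod m, x i * y (k - i))
      = (∏ i : ZMod m, x i) * ∏ i : ZMod m, y i := by
    intro k
    rw [Finset.prod_mul_distrib]
    congr 1
    exact Equiv.prod_comp (Equiv.subLeft k) y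
  have hpar : ∀ k k' : ZMod m, Even (N k) ↔ Even (N k') := by
    intro k k'
    have h : (-1 : ℤ) ^ N k = (-1 : ℤ) ^ N k' := by
      rw [← hprod, ← hprod, hind, hind]
    constructor <;> intro he <;> by_contra ho <;>
      [rw [he.neg_one_pow, (Nat.not_even_iff_odd.mp ho).neg_one_pow] at h;
       rw [(Nat.not_even_iff_odd.mp ho).neg_one_pow, he.neg_one_pow] at h] <;>
      norm_num at h
  constructor
  · intro k
    rw [hsum]
    exact (Int.odd_coe_nat m |>.mpr hm).sub_even (even_two_mul _)
  · intro k k'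
    rw [hsum, hsum]
    rw [Int.ModEq]
    have h2 : (2 : ℤ) ∣ (N k : ℤ) - (N k') := by
      exact (Int.even_sub.mpr (by simp [Int.even_coe_nat, hpar k k'])).two_dvd
    rcases h2 with ⟨t, ht⟩
    have : (m : ℤ) - 2 * N k - ((m : ℤ) - 2 * N k') = 4 * (-t) := by linarith
    omega
end

section
/- Let X, Y ∈ ℂ^{m×k} × ℂ^{k×n} with XY = C and rank(X) = rank(C) = r. If C = U D V is a decomposition with U ∈ ℂ^{m×r} of rank r, D ∈ ℂ^{r×r} invertible, V ∈ ℂ^{r×n} of rank r, then there exist W ∈ ℂ^{r×k} and Z ∈ ℂ^{k×r} with X = UW, Y = ZV and WZ = D, provided also rank(Y) = r. -/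
open Matrix LinearMap Module

private lemma mv_inj {a b : ℕ} {A B : Matrix (Fin a) (Fin b) ℂ}
    (h : A.mulVecLin = B.mulVecLin) : A = B := by
  have : Matrix.toLin' A = Matrix.toLin' B := by
    rw [Matrix.toLin'_apply', Matrix.toLin'_apply', h]
  have := congrArg LinearMap.toMatrix' this
  rwa [LinearMap.toMatrix'_toLin', LinearMap.toMatrix'_toLin'] at this



/-- If `XY = C`, `rank X = rank Y = rank C = r`, and `C = U D V`
with `U` of rank `r`, `D` invertible, `V` of rank `r`, then `X = UW`, `Y = ZV`
for some `W, Z` with `WZ = D`. -/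
theorem stmt10 {m n k r : ℕ}
    (X : Matrix (Fin m) (Fin k) ℂ) (Y : Matrix (Fin k) (Fin n) ℂ)
    (C : Matrix (Fin m) (Fin n) ℂ)
    (U : Matrix (Fin m) (Fin r) ℂ) (D : Matrix (Fin r) (Fin r) ℂ)
    (V : Matrix (Fin r) (Fin n) ℂ)
    (hXY : X * Y = C) (hX : X.rank = r) (hY : Y.rank = r) (hC : C.rank = r)
    (hUDV : C = U * D * V) (hU : U.rank = r) (hD : IsUnit D) (hV : V.rank = r) :
    ∃ (W : Matrix (Fin r) (Fin k) ℂ) (Z : Matrix (Fin k) (Fin r) ℂ),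
      X = U * W ∧ Y = Z * V ∧ W * Z = D := by
  set X' := X.mulVecLin with hX'
  set Y' := Y.mulVecLin with hY'
  set C' := C.mulVecLin with hC'
  set U' := U.mulVecLin with hU'
  set V' := V.mulVecLin with hV'
  set D' := D.mulVecLin with hD'
  have hcomp : C' = X' ∘ₗ Y' := by rw [hC', ← hXY, Matrix.mulVecLin_mul]
  have hcomp2 : C' = U' ∘ₗ (D' ∘ₗ V') := by
    rw [hC', hUDV, Matrix.mulVecLin_mul, Matrix.mulVecLin_mul]
    rfl
  -- U' injective
  have hUinj : Function.Injective U' := by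
    rw [← LinearMap.ker_eq_bot]
    have h1 := U'.finrank_range_add_finrank_ker
    rw [show finrank ℂ (LinearMap.range U') = r from hU, finrank_fintype_fun_eq_card,
      Fintype.card_fin] at h1
    exact Submodule.finrank_eq_zero.mp (by omega)
  -- V' surjective
  have hVsurj : Function.Surjective V' := by
    rw [← LinearMap.range_eq_top]
    apply Submodule.eq_top_of_finrank_eq
    rw [show finrank ℂ (LinearMap.range V') = r from hV, finrank_fintype_fun_eq_card,
      Fintype.card_fin]
  -- range X' = range C'
  have hrCX : LinearMap.range C' ≤ LinearMap.range X' := by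
    rw [hcomp]; exact LinearMap.range_comp_le_range _ _
  have hrXC : LinearMap.range X' = LinearMap.range C' := by
    symm
    apply Submodule.eq_of_le_of_finrank_le hrCX
    rw [show finrank ℂ (LinearMap.range C') = r from hC,
      show finrank ℂ (LinearMap.range X') = r from hX]
  have hrCU : LinearMap.range C' ≤ LinearMap.range U' := by
    rw [hcomp2]; exact LinearMap.range_comp_le_range _ _
  have hrXU : LinearMap.range X' ≤ LinearMap.range U' := hrXC ▸ hrCU
  -- factor X' through U'
  obtain ⟨W', hW'⟩ := Module.projective_lifting_property U'.rangeRestrict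
    (X'.codRestrict (LinearMap.range U') fun x => hrXU (LinearMap.mem_range_self _ x))
    U'.surjective_rangeRestrict
  have hXW : U' ∘ₗ W' = X' := by
    have := congrArg (fun f => (LinearMap.range U').subtype ∘ₗ f) hW'
    simpa [LinearMap.subtype_comp_codRestrict, ← LinearMap.comp_assoc] using this
  -- ker Y' = ker C'
  have hkYC : LinearMap.ker Y' ≤ LinearMap.ker C' := by
    rw [hcomp]; exact LinearMap.ker_le_ker_comp _ _
  have hkCY : LinearMap.ker Y' = LinearMap.ker C' := by
    apply Submodule.eq_of_le_of_finrank_le hkYC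
    have h1 := Y'.finrank_range_add_finrank_ker
    have h2 := C'.finrank_range_add_finrank_ker
    rw [show finrank ℂ (LinearMap.range Y') = r from hY, finrank_fintype_fun_eq_card,
      Fintype.card_fin] at h1
    rw [show finrank ℂ (LinearMap.range C') = r from hC, finrank_fintype_fun_eq_card,
      Fintype.card_fin] at h2
    omega
  have hkVY : LinearMap.ker V' ≤ LinearMap.ker Y' := by
    rw [hkCY, hcomp2, ← LinearMap.comp_assoc]
    exact LinearMap.ker_le_ker_comp _ _
  -- factor Y' through V'
  obtain ⟨σ, hσ⟩ := V'.exists_rightInverse_of_surjective (LinearMap.range_eq_top.2 hVsurj)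
  have hZY : (Y' ∘ₗ σ) ∘ₗ V' = Y' := by
    refine LinearMap.ext fun x => ?_
    simp only [LinearMap.comp_apply]
    have h0 : σ (V' x) - x ∈ LinearMap.ker V' := by
      simp only [LinearMap.mem_ker, map_sub]
      have := congrArg (fun f => f (V' x)) hσ
      simpa using sub_eq_zero.2 this
    have := hkVY h0
    rw [LinearMap.mem_ker, map_sub, sub_eq_zero] at this
    exact this
  set Z' := Y' ∘ₗ σ with hZ'
  -- W' ∘ Z' = D'
  have hWZ : W' ∘ₗ Z' = D' := by
    have key : U' ∘ₗ ((W' ∘ₗ Z') ∘ₗ V') = U' ∘ₗ (D' ∘ₗ V') := by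
      calc U' ∘ₗ ((W' ∘ₗ Z') ∘ₗ V') = (U' ∘ₗ W') ∘ₗ (Z' ∘ₗ V') := by
            simp only [LinearMap.comp_assoc]
        _ = X' ∘ₗ Y' := by rw [hXW, hZY]
        _ = U' ∘ₗ (D' ∘ₗ V') := by rw [← hcomp, hcomp2]
    refine LinearMap.ext fun x => ?_
    obtain ⟨y, rfl⟩ := hVsurj x
    have := congrArg (fun f => f y) key
    simp only [LinearMap.comp_apply] at this
    exact hUinj this
  refine ⟨LinearMap.toMatrix' W', LinearMap.toMatrix' Z', ?_, ?_, ?_⟩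
  · apply mv_inj
    rw [Matrix.mulVecLin_mul, ← hU', ← hX', ← hXW]
    congr 1
    rw [← Matrix.toLin'_apply', Matrix.toLin'_toMatrix']
  · apply mv_inj
    rw [Matrix.mulVecLin_mul, ← hV', ← hY', ← hZY]
    congr 1
    rw [← Matrix.toLin'_apply', Matrix.toLin'_toMatrix']
  · apply mv_inj
    rw [Matrix.mulVecLin_mul, ← hD', ← hWZ]
    congr 1 <;> rw [← Matrix.toLin'_apply', Matrix.toLin'_toMatrix']
end

section
/- Let c ≥ 0 and let z ∈ ℝ^k satisfy ∑_l z_l = c. Partition the indices into I₊ = {l : z_l > 0} and I₋ = {l : z_l ≤ 0}. Then the Euclidean projection of z onto the simplex {w ∈ ℝ^k : ∑ w_l = c, w ≥ 0} assigns 0 to every coordinate in I₋, and on I₊ it equals the projection of (z_l)_{l∈I₊} onto the simplex {w ∈ ℝ^{I₊} : ∑ w_l = c, w ≥ 0}. -/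
/-- If `z` lies on the hyperplane `∑ z = c` and `p` is its Euclidean
projection onto the simplex, then `p` vanishes on the nonpositive coordinates of
`z`, and on the positive coordinates it is the projection of the restriction of
`z` onto the corresponding lower-dimensional simplex. -/
theorem stmt16 (k : ℕ) (c : ℝ) (hc : 0 ≤ c) (z p : Fin k → ℝ)
    (hz : (∑ l, z l) = c)
    (hp : ((∑ l, p l) = c ∧ ∀ l, 0 ≤ p l) ∧
      ∀ w : Fin k → ℝ, ((∑ l, w l) = c ∧ ∀ l, 0 ≤ w l) →
        (∑ l, (z l - p l) ^ 2) ≤ ∑ l, (z l - w l) ^ 2) :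
    (∀ l, z l ≤ 0 → p l = 0) ∧
    (((∑ l : {l : Fin k // 0 < z l}, p l.1) = c ∧
        ∀ l : {l : Fin k // 0 < z l}, 0 ≤ p l.1) ∧
      ∀ w : {l : Fin k // 0 < z l} → ℝ,
        ((∑ l, w l) = c ∧ ∀ l, 0 ≤ w l) →
          (∑ l : {l : Fin k // 0 < z l}, (z l.1 - p l.1) ^ 2) ≤
            ∑ l : {l : Fin k // 0 < z l}, (z l.1 - w l) ^ 2) := by
  obtain ⟨⟨hpsum, hpnn⟩, hmin⟩ := hp
  -- Part 1
  have h0 : ∀ l, z l ≤ 0 → p l = 0 := by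
    intro l hzl
    by_contra hpl
    have hpl' : 0 < p l := lt_of_le_of_ne (hpnn l) (Ne.symm hpl)
    -- sum of z - p is zero
    have hsum0 : (∑ i, (z i - p i)) = 0 := by
      rw [Finset.sum_sub_distrib, hz, hpsum, sub_self]
    -- exists m with z m - p m > 0
    have hex : ∃ m, 0 < z m - p m := by
      by_contra h
      push_neg at h
      have : (∑ i, (z i - p i)) < ∑ i : Fin k, (0 : ℝ) := by
        apply Finset.sum_lt_sum (fun i _ => h i)
        exact ⟨l, Finset.mem_univ l, by linarith⟩
      simp [hsum0] at this
    obtain ⟨m, hm⟩ := hex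
    have hzm : 0 < z m := lt_of_lt_of_le (by linarith [hpnn m]) (le_refl _)
    have hml : m ≠ l := by
      intro h; rw [h] at hzm; linarith
    -- perturbed point
    set w : Fin k → ℝ := Function.update (Function.update p l 0) m (p m + p l) with hw
    have hwl : w l = 0 := by
      rw [hw, Function.update_of_ne (Ne.symm hml), Function.update_self]
    have hwm : w m = p m + p l := by
      rw [hw, Function.update_self]
    have hwother : ∀ i, i ≠ l → i ≠ m → w i = p i := by
      intro i hil him
      rw [hw, Function.update_of_ne him, Function.update_of_ne hil]
    -- split sums over l, m, rest
    have hsplit : ∀ f : Fin k → ℝ,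
        (∑ i, f i) = (∑ i ∈ (Finset.univ.erase l).erase m, f i) + f m + f l := by
      intro f
      rw [Finset.sum_erase_add _ _ (Finset.mem_erase.mpr ⟨hml, Finset.mem_univ m⟩),
        Finset.sum_erase_add _ _ (Finset.mem_univ l)]
    have hwsum : (∑ i, w i) = c := by
      rw [hsplit w, hwl, hwm]
      rw [hsplit p] at hpsum
      have : ∑ i ∈ (Finset.univ.erase l).erase m, w i
          = ∑ i ∈ (Finset.univ.erase l).erase m, p i := by
        apply Finset.sum_congr rfl
        intro i hi
        simp only [Finset.mem_erase] at hi
        exact hwother i hi.2.1 hi.1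
      rw [this]; linarith
    have hwnn : ∀ i, 0 ≤ w i := by
      intro i
      by_cases him : i = m
      · rw [him, hwm]; linarith [hpnn m]
      by_cases hil : i = l
      · rw [hil, hwl]
      · rw [hwother i hil him]; exact hpnn i
    have hle := hmin w ⟨hwsum, hwnn⟩
    -- strict improvement: contradiction
    have heq : ∑ i ∈ (Finset.univ.erase l).erase m, (z i - w i) ^ 2
        = ∑ i ∈ (Finset.univ.erase l).erase m, (z i - p i) ^ 2 := by
      apply Finset.sum_congr rfl
      intro i hi
      simp only [Finset.mem_erase] at hi
      rw [hwother i hi.2.1 hi.1]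
    rw [hsplit (fun i => (z i - w i) ^ 2), hsplit (fun i => (z i - p i) ^ 2), heq,
      hwl, hwm] at hle
    nlinarith [hle, hpl', hm, hzl]
  refine ⟨h0, ?_⟩
  -- Part 2
  set S : Finset (Fin k) := Finset.univ.filter (fun l => 0 < z l) with hS
  have hmemS : ∀ x : Fin k, x ∈ S ↔ 0 < z x := by
    intro x; simp [hS]
  have hsub : ∀ f : Fin k → ℝ,
      (∑ l : {l : Fin k // 0 < z l}, f l.1) = ∑ l ∈ S, f l :=
    fun f => (Finset.sum_subtype S hmemS f).symm
  have hzeroP : ∀ i ∈ Finset.univ, i ∉ S → p i = 0 := by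
    intro i _ hi
    exact h0 i (le_of_not_gt (by simpa [hmemS] using hi))
  have hPsum : (∑ l ∈ S, p l) = c := by
    rw [← hpsum]
    exact Finset.sum_subset (Finset.subset_univ S) hzeroP
  refine ⟨⟨by rw [hsub]; exact hPsum, fun l => hpnn l.1⟩, ?_⟩
  intro w ⟨hwsum, hwnn⟩
  set W : Fin k → ℝ := fun l => if h : 0 < z l then w ⟨l, h⟩ else 0 with hWdef
  have hWS : ∀ l : {l : Fin k // 0 < z l}, W l.1 = w l := by
    intro l; simp [hWdef, l.2]
  have hWsum : (∑ l, W l) = c := by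
    have : (∑ l ∈ S, W l) = c := by
      rw [← hsub W, ← hwsum]
      exact Finset.sum_congr rfl (fun l _ => hWS l)
    rw [← this]
    symm
    apply Finset.sum_subset (Finset.subset_univ S)
    intro i _ hi
    rw [hmemS] at hi
    simp [hWdef, hi]
  have hWnn : ∀ l, 0 ≤ W l := by
    intro l
    by_cases h : 0 < z l
    · simp only [hWdef, dif_pos h]; exact hwnn ⟨l, h⟩
    · simp [hWdef, h]
  have hle := hmin W ⟨hWsum, hWnn⟩
  have hWrw : (∑ l : {l : Fin k // 0 < z l}, (z l.1 - w l) ^ 2)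
      = ∑ l ∈ S, (z l - W l) ^ 2 := by
    rw [← hsub (fun l => (z l - W l) ^ 2)]
    exact Finset.sum_congr rfl (fun l _ => by rw [hWS l])
  rw [hsub (fun l => (z l - p l) ^ 2), hWrw]
  rw [← Finset.sum_filter_add_sum_filter_not Finset.univ (fun l => 0 < z l)
    (fun l => (z l - p l) ^ 2),
    ← Finset.sum_filter_add_sum_filter_not Finset.univ (fun l => 0 < z l)
    (fun l => (z l - W l) ^ 2)] at hle
  have hoff : ∑ l ∈ Finset.univ.filter (fun l => ¬ 0 < z l), (z l - p l) ^ 2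
      = ∑ l ∈ Finset.univ.filter (fun l => ¬ 0 < z l), (z l - W l) ^ 2 := by
    apply Finset.sum_congr rfl
    intro i hi
    simp only [Finset.mem_filter] at hi
    rw [h0 i (le_of_not_gt hi.2)]
    simp [hWdef, hi.2]
  rw [hoff] at hle
  simpa [hS] using hle
end
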